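/- Let α ∈ (0,1) be irrational. For every ε > 0 there exists a constant C(ε) > 0, depending only on ε and α, such that for every θ ∈ ℝ and all integers ℓ₁ ≤ ℓ₂: ∏_{ℓ = ℓ₁}^{ℓ₂} |cos π(θ + ℓα)| ≤ C(ε)·e^{(ℓ₂ − ℓ₁)(−log 2 + ε)}·min_{ℓ₁ ≤ j ≤ ℓ₂} |cos π(θ + jα)|. -/

import Mathlib

open Real Filter

open Real MeasureTheory intervalIntegral Set

noncomputable def flog (x : ℝ) : ℝ := Real.log |Real.sin (π * x)|

lemma flog_per : Function.Periodic flog 1 := by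
  intro x
  simp only [flog, mul_add, mul_one, Real.sin_add_pi, abs_neg]

lemma neg_log_le (y : ℝ) (hy : 0 < y) : -Real.log y ≤ 2 * y ^ (-(1:ℝ)/2) := by
  have h1 : Real.log (y ^ (-(1:ℝ)/2)) = (-(1:ℝ)/2) * Real.log y := Real.log_rpow hy _
  have h2 : Real.log (y ^ (-(1:ℝ)/2)) ≤ y ^ (-(1:ℝ)/2) - 1 :=
    Real.log_le_sub_one_of_pos (Real.rpow_pos_of_pos hy _)
  nlinarith [Real.rpow_pos_of_pos hy (-(1:ℝ)/2)]

lemma sin_lb {x : ℝ} (hx : x ∈ Set.Icc (0:ℝ) 1) : 2 * min x (1-x) ≤ Real.sin (π * x) := by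
  obtain ⟨h0, h1⟩ := hx
  rcases le_total x (1/2) with h | h
  · rw [min_eq_left (by linarith)]
    have := Real.mul_le_sin (x := π * x) (by positivity) (by nlinarith [Real.pi_pos])
    have hπ := Real.pi_pos
    calc 2 * x = 2/π * (π * x) := by field_simp
    _ ≤ Real.sin (π * x) := this
  · rw [min_eq_right (by linarith)]
    have hs : Real.sin (π * x) = Real.sin (π * (1 - x)) := by
      rw [mul_one_sub, ← Real.sin_pi_sub]
    rw [hs]
    have := Real.mul_le_sin (x := π * (1-x)) (by nlinarith [Real.pi_pos]) (by nlinarith [Real.pi_pos])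
    have hπ := Real.pi_pos
    calc 2 * (1-x) = 2/π * (π * (1-x)) := by field_simp
    _ ≤ Real.sin (π * (1-x)) := this

lemma flog_intble : IntervalIntegrable flog volume 0 1 := by
  rw [intervalIntegrable_iff_integrableOn_Ioc_of_le zero_le_one]
  have hbd : IntervalIntegrable (fun x : ℝ => 2 * x ^ (-(1:ℝ)/2) + 2 * (1-x) ^ (-(1:ℝ)/2)) volume 0 1 := by
    apply IntervalIntegrable.add
    · exact (intervalIntegrable_rpow' (by norm_num)).const_mul 2
    · have := (intervalIntegrable_rpow' (r := -(1:ℝ)/2) (by norm_num) (a := 0) (b := 1)).comp_sub_left 1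
      simpa using (this.const_mul 2).symm
  have hbd' := (intervalIntegrable_iff_integrableOn_Ioc_of_le zero_le_one).mp hbd
  have hm : Measurable flog := by
    unfold flog
    exact (Real.measurable_log.comp ((Real.measurable_sin.comp (measurable_const.mul measurable_id)).abs))
  apply hbd'.mono' hm.aestronglyMeasurable
  · filter_upwards [ae_restrict_mem measurableSet_Ioc] with x hx
    obtain ⟨h0, h1⟩ := hx
    rcases eq_or_lt_of_le h1 with rfl | h1
    · have h1 : Real.sin (π * 1) = 0 := by simp
      simp only [flog, h1, abs_zero, Real.log_zero, norm_zero]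
      positivity
    · have hsin : 0 < Real.sin (π * x) := by
        have := sin_lb (x := x) ⟨le_of_lt h0, le_of_lt h1⟩
        have : (0:ℝ) < 2 * min x (1-x) := by
          rcases le_total x (1-x) with h|h
          · rw [min_eq_left h]; linarith
          · rw [min_eq_right h]; linarith
        linarith [sin_lb (x := x) ⟨le_of_lt h0, le_of_lt h1⟩]
      have hsle : Real.sin (π * x) ≤ 1 := Real.sin_le_one _
      have hlog_le : Real.log (Real.sin (π * x)) ≤ 0 := Real.log_nonpos (le_of_lt hsin) hsle
      have hmin : x * (1-x) ≤ min x (1-x) := by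
        rcases le_total x (1-x) with h|h
        · rw [min_eq_left h]; nlinarith
        · rw [min_eq_right h]; nlinarith
      have hlb : Real.log (x * (1-x)) + Real.log 2 ≤ Real.log (Real.sin (π * x)) := by
        rw [← Real.log_mul (by nlinarith) (by norm_num)]
        apply Real.log_le_log (by nlinarith)
        calc x * (1-x) * 2 = 2 * (x * (1-x)) := by ring
        _ ≤ 2 * min x (1-x) := by linarith
        _ ≤ Real.sin (π * x) := sin_lb ⟨le_of_lt h0, le_of_lt h1⟩
      rw [flog, abs_of_pos hsin, Real.norm_eq_abs, abs_of_nonpos hlog_le]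
      have hsplit : Real.log (x * (1-x)) = Real.log x + Real.log (1-x) :=
        Real.log_mul (ne_of_gt h0) (by linarith)
      have l1 := neg_log_le x h0
      have l2 := neg_log_le (1-x) (by linarith)
      have hl2 : Real.log 2 ≥ 0 := Real.log_nonneg (by norm_num)
      nlinarith

noncomputable def flogc (x : ℝ) : ℝ := Real.log |Real.cos (π * x)|

lemma flogc_eq (x : ℝ) : flogc x = flog (x + 1/2) := by
  have : π * (x + 1/2) = π * x + π/2 := by ring
  rw [flogc, flog, this, Real.sin_add_pi_div_two]

lemma flog_intble_12 : IntervalIntegrable flog volume 1 2 := by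
  have h := flog_intble.comp_add_right (-1)
  have he : (fun x => flog (x + (-1))) = flog := funext fun x => by
    have := flog_per.sub_eq x
    simpa [sub_eq_add_neg] using this
  rw [he] at h
  norm_num at h
  exact h

lemma flog_intble_02 : IntervalIntegrable flog volume 0 2 :=
  flog_intble.trans flog_intble_12

lemma flogc_intble : IntervalIntegrable flogc volume 0 1 := by
  have h : IntervalIntegrable flog volume (1/2) (3/2) :=
    flog_intble_02.mono_set (by rw [Set.uIcc_of_le (by norm_num), Set.uIcc_of_le (by norm_num)]; intro x hx; exact ⟨by linarith [hx.1], by linarith [hx.2]⟩)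
  have h2 := h.comp_add_right (1/2)
  have he : (fun x => flog (x + 1/2)) = flogc := funext fun x => (flogc_eq x).symm
  rw [he] at h2
  norm_num at h2
  exact h2

lemma flog_12 : ∫ x in (1:ℝ)..2, flog x = ∫ x in (0:ℝ)..1, flog x := by
  have := flog_per.intervalIntegral_add_eq (1:ℝ) (0:ℝ)
  norm_num at this
  exact this

lemma Icos_eq : ∫ x in (0:ℝ)..1, flogc x = ∫ x in (0:ℝ)..1, flog x := by
  have h1 : ∫ x in (0:ℝ)..1, flogc x = ∫ x in (0:ℝ)..1, flog (x + 1/2) := by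
    apply intervalIntegral.integral_congr
    intro x _; exact flogc_eq x
  rw [h1, intervalIntegral.integral_comp_add_right flog]
  have := flog_per.intervalIntegral_add_eq (1/2 : ℝ) (0 : ℝ)
  norm_num at this ⊢
  convert this using 2 <;> norm_num

lemma bad_null : volume {x : ℝ | ∃ n : ℤ, x = (n:ℝ)/2} = 0 := by
  have : {x : ℝ | ∃ n : ℤ, x = (n:ℝ)/2} = Set.range (fun n : ℤ => (n:ℝ)/2) := by
    ext x; simp [Set.range, eq_comm]
  rw [this]
  exact (Set.countable_range _).measure_zero _

lemma flog_double {x : ℝ} (hx : ¬ ∃ n : ℤ, x = (n:ℝ)/2) :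
    flog (2*x) = Real.log 2 + flog x + flogc x := by
  have hs : Real.sin (π * x) ≠ 0 := by
    intro h
    rcases Real.sin_eq_zero_iff.mp h with ⟨n, hn⟩
    refine hx ⟨2*n, ?_⟩
    push_cast
    field_simp
    exact mul_left_cancel₀ Real.pi_ne_zero (by linarith)
  have hc : Real.cos (π * x) ≠ 0 := by
    intro h
    have h0 : Real.sin (π * x + π/2) = 0 := by rw [Real.sin_add_pi_div_two]; exact h
    rcases Real.sin_eq_zero_iff.mp h0 with ⟨n, hn⟩
    refine hx ⟨2*n - 1, ?_⟩
    push_cast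
    field_simp
    exact mul_left_cancel₀ Real.pi_ne_zero (by linarith)
  have h2 : π * (2*x) = 2 * (π * x) := by ring
  rw [flog, flog, flogc, h2, Real.sin_two_mul]
  rw [abs_mul, abs_mul, abs_two]
  rw [Real.log_mul (by positivity) (abs_ne_zero.mpr hc), Real.log_mul (by norm_num) (abs_ne_zero.mpr hs)]


lemma I_val : ∫ x in (0:ℝ)..1, flog x = -Real.log 2 := by
  set I := ∫ x in (0:ℝ)..1, flog x with hI
  have hsplit : (∫ x in (0:ℝ)..2, flog x) = I + I := by
    rw [← intervalIntegral.integral_add_adjacent_intervals flog_intble flog_intble_12, flog_12]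
  have h1 : ∫ x in (0:ℝ)..1, flog (2*x) = I := by
    rw [intervalIntegral.integral_comp_mul_left flog (by norm_num : (2:ℝ) ≠ 0)]
    norm_num
    rw [hsplit]
    ring
  have h2 : ∫ x in (0:ℝ)..1, flog (2*x) = ∫ x in (0:ℝ)..1, (Real.log 2 + flog x + flogc x) := by
    apply intervalIntegral.integral_congr_ae
    have hae : ∀ᵐ x : ℝ, ¬ ∃ n : ℤ, x = (n:ℝ)/2 := by
      rw [MeasureTheory.ae_iff]
      simpa using bad_null
    filter_upwards [hae] with x hx _
    exact flog_double hx
  have h3 : ∫ x in (0:ℝ)..1, (Real.log 2 + flog x + flogc x) = Real.log 2 + I + I := by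
    rw [intervalIntegral.integral_add (intervalIntegrable_const.add flog_intble) flogc_intble,
        intervalIntegral.integral_add intervalIntegrable_const flog_intble]
    simp [Icos_eq]
    rfl
  have := h1.symm.trans (h2.trans h3)
  linarith

lemma Icos_val : ∫ x in (0:ℝ)..1, flogc x = -Real.log 2 := Icos_eq.trans I_val

lemma cos_ae_ne : ∀ᵐ x : ℝ, Real.cos (π * x) ≠ 0 := by
  rw [MeasureTheory.ae_iff]
  apply measure_mono_null _ bad_null
  intro x hx
  simp only [Set.mem_setOf_eq, not_not] at hx ⊢
  have h0 : Real.sin (π * x + π/2) = 0 := by rw [Real.sin_add_pi_div_two]; exact hx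
  rcases Real.sin_eq_zero_iff.mp h0 with ⟨n, hn⟩
  refine ⟨2*n - 1, ?_⟩
  push_cast
  field_simp
  exact mul_left_cancel₀ Real.pi_ne_zero (by linarith)

lemma F_eq_ae : (fun x => Real.log |2 * Real.cos (π * x)|) =ᵐ[volume] (fun x => Real.log 2 + flogc x) := by
  filter_upwards [cos_ae_ne] with x hx
  rw [abs_mul, abs_two, Real.log_mul two_ne_zero (abs_ne_zero.mpr hx)]
  rfl

lemma F_intbleOn : IntegrableOn (fun x => Real.log |2 * Real.cos (π * x)|) (Ioc (0:ℝ) 1) volume := by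
  have h0 : IntervalIntegrable (fun x => Real.log 2 + flogc x) volume 0 1 :=
    (_root_.intervalIntegrable_const (c := Real.log 2)).add flogc_intble
  have h := (intervalIntegrable_iff_integrableOn_Ioc_of_le zero_le_one).mp h0
  exact h.congr (ae_restrict_of_ae F_eq_ae.symm)

lemma F_integral_zero : ∫ x in Ioc (0:ℝ) 1, Real.log |2 * Real.cos (π * x)| = 0 := by
  rw [integral_congr_ae (ae_restrict_of_ae F_eq_ae)]
  have h1 : IntegrableOn (fun _ : ℝ => Real.log 2) (Ioc (0:ℝ) 1) volume :=
    integrableOn_const measure_Ioc_lt_top.ne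
  have h2 : IntegrableOn flogc (Ioc (0:ℝ) 1) volume :=
    (intervalIntegrable_iff_integrableOn_Ioc_of_le zero_le_one).mp flogc_intble
  rw [integral_add h1 h2]
  have : ∫ x in Ioc (0:ℝ) 1, flogc x = ∫ x in (0:ℝ)..1, flogc x :=
    (intervalIntegral.integral_of_le zero_le_one).symm
  rw [this, Icos_val]
  simp

lemma trunc_small : ∀ ε : ℝ, 0 < ε → ∃ δ : ℝ, 0 < δ ∧ δ < 1 ∧
    (∫ x in Ioc (0:ℝ) 1, Real.log (max |2 * Real.cos (π * x)| δ)) < ε := by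
  intro ε hε
  set f : ℕ → ℝ → ℝ := fun n x => Real.log (max |2 * Real.cos (π * x)| ((1/2:ℝ)^(n+1))) with hf
  have hcont : ∀ n, Continuous (f n) := by
    intro n
    apply Continuous.log
    · exact (((continuous_const.mul (Real.continuous_cos.comp (continuous_const.mul continuous_id))).abs).max continuous_const)
    · intro x
      have : (0:ℝ) < (1/2:ℝ)^(n+1) := by positivity
      exact ne_of_gt (lt_of_lt_of_le this (le_max_right _ _))
  have hint : ∀ n, IntegrableOn (f n) (Ioc (0:ℝ) 1) volume := fun n =>
    (hcont n).integrableOn_Ioc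
  have hanti : ∀ᵐ x ∂(volume.restrict (Ioc (0:ℝ) 1)), Antitone fun n => f n x := by
    apply Filter.Eventually.of_forall
    intro x
    apply antitone_nat_of_succ_le
    intro n
    apply Real.log_le_log (lt_of_lt_of_le (by positivity) (le_max_right _ _))
    apply max_le_max le_rfl
    exact pow_le_pow_of_le_one (by norm_num) (by norm_num) (by omega)
  have htend : ∀ᵐ x ∂(volume.restrict (Ioc (0:ℝ) 1)),
      Filter.Tendsto (fun n => f n x) Filter.atTop (nhds (Real.log |2 * Real.cos (π * x)|)) := by
    apply ae_restrict_of_ae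
    filter_upwards [cos_ae_ne] with x hx
    have hpos : 0 < |2 * Real.cos (π * x)| := by
      rw [abs_pos]; intro h; apply hx; 
      rcases mul_eq_zero.mp h with h|h
      · norm_num at h
      · exact h
    have hev : ∀ᶠ n in Filter.atTop, f n x = Real.log |2 * Real.cos (π * x)| := by
      have : Filter.Tendsto (fun n : ℕ => ((1:ℝ)/2)^(n+1)) Filter.atTop (nhds 0) := by
        have := tendsto_pow_atTop_nhds_zero_of_lt_one (by norm_num : (0:ℝ) ≤ 1/2) (by norm_num : (1/2:ℝ) < 1)
        exact this.comp (Filter.tendsto_add_atTop_nat 1)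
      filter_upwards [this.eventually_le_const hpos] with n hn
      rw [hf]
      simp only []
      rw [max_eq_left hn]
    exact Filter.Tendsto.congr' (by filter_upwards [hev] with n hn; exact hn.symm) tendsto_const_nhds
  have hlim := MeasureTheory.integral_tendsto_of_tendsto_of_antitone hint F_intbleOn hanti htend
  rw [F_integral_zero] at hlim
  have := hlim.eventually_lt_const hε
  rcases this.exists with ⟨n, hn⟩
  exact ⟨(1/2:ℝ)^(n+1), by positivity, by
    apply pow_lt_one₀ (by norm_num) (by norm_num); omega, hn⟩
open Real MeasureTheory Set intervalIntegral

noncomputable section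

instance fact01 : Fact ((0:ℝ) < 1) := ⟨one_pos⟩

open AddCircle

def ac (x : ℝ) : AddCircle (1:ℝ) := (x : AddCircle (1:ℝ))

def good (a : ℝ) (G : C(AddCircle (1:ℝ), ℂ)) : Prop :=
  ∀ ε : ℝ, 0 < ε → ∃ N₀ : ℕ, ∀ N : ℕ, N₀ ≤ N → ∀ θ : AddCircle (1:ℝ),
    ‖(∑ l ∈ Finset.range N, G (θ + l • ac a)) -
      (N : ℂ) * ∫ z, G z ∂(haarAddCircle)‖ ≤ N * ε

lemma integrable_cm (G : C(AddCircle (1:ℝ), ℂ)) : Integrable G haarAddCircle := by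
  apply (integrable_const ‖G‖).mono' G.continuous.aestronglyMeasurable
  exact Filter.Eventually.of_forall fun x => G.norm_coe_le_norm x

lemma good_zero (a : ℝ) : good a 0 := by
  intro ε hε
  refine ⟨0, fun N _ θ => ?_⟩
  simp [integral_zero]
  exact mul_nonneg (Nat.cast_nonneg N) hε.le

lemma good_add (a : ℝ) {G H : C(AddCircle (1:ℝ), ℂ)} (hG : good a G) (hH : good a H) :
    good a (G + H) := by
  intro ε hε
  obtain ⟨N₁, h₁⟩ := hG (ε/2) (by linarith)
  obtain ⟨N₂, h₂⟩ := hH (ε/2) (by linarith)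
  refine ⟨max N₁ N₂, fun N hN θ => ?_⟩
  have e1 := h₁ N (le_trans (le_max_left _ _) hN) θ
  have e2 := h₂ N (le_trans (le_max_right _ _) hN) θ
  have hint : ∫ z, (G + H) z ∂(haarAddCircle) = (∫ z, G z ∂(haarAddCircle)) + ∫ z, H z ∂(haarAddCircle) := by
    simp only [ContinuousMap.add_apply]
    exact integral_add (integrable_cm G) (integrable_cm H)
  have hsum : (∑ l ∈ Finset.range N, (G + H) (θ + l • ac a)) =
      (∑ l ∈ Finset.range N, G (θ + l • ac a)) +
      (∑ l ∈ Finset.range N, H (θ + l • ac a)) := by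
    simp [Finset.sum_add_distrib]
  rw [hsum, hint]
  set SG := ∑ l ∈ Finset.range N, G (θ + l • ac a)
  set SH := ∑ l ∈ Finset.range N, H (θ + l • ac a)
  set IG := ∫ z, G z ∂(haarAddCircle)
  set IH := ∫ z, H z ∂(haarAddCircle)
  have hrw : SG + SH - (N:ℂ) * (IG + IH) = (SG - N * IG) + (SH - N * IH) := by ring
  rw [hrw]
  calc ‖(SG - (N:ℂ) * IG) + (SH - (N:ℂ) * IH)‖ ≤ ‖SG - (N:ℂ) * IG‖ + ‖SH - (N:ℂ) * IH‖ :=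
        norm_add_le _ _
  _ ≤ N * (ε/2) + N * (ε/2) := add_le_add e1 e2
  _ = N * ε := by ring

lemma good_smul (a : ℝ) (c : ℂ) {G : C(AddCircle (1:ℝ), ℂ)} (hG : good a G) :
    good a (c • G) := by
  intro ε hε
  rcases eq_or_ne c 0 with rfl | hc
  · simpa using good_zero a ε hε
  obtain ⟨N₀, h₀⟩ := hG (ε/‖c‖) (div_pos hε (norm_pos_iff.mpr hc))
  refine ⟨N₀, fun N hN θ => ?_⟩
  have e := h₀ N hN θ
  have hint : ∫ z, (c • G) z ∂(haarAddCircle) = c * ∫ z, G z ∂(haarAddCircle) := by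
    simp only [ContinuousMap.smul_apply, smul_eq_mul]
    rw [MeasureTheory.integral_const_mul]
  have hsum : (∑ l ∈ Finset.range N, (c • G) (θ + l • ac a)) =
      c * ∑ l ∈ Finset.range N, G (θ + l • ac a) := by
    simp [Finset.mul_sum]
  rw [hsum, hint]
  set S := ∑ l ∈ Finset.range N, G (θ + l • ac a)
  set IG := ∫ z, G z ∂(haarAddCircle)
  have hrw : c * S - (N:ℂ) * (c * IG) = c * (S - N * IG) := by ring
  rw [hrw, norm_mul]
  calc ‖c‖ * ‖S - (N:ℂ) * IG‖ ≤ ‖c‖ * (N * (ε/‖c‖)) :=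
        mul_le_mul_of_nonneg_left e (norm_nonneg c)
  _ = N * ε := by
        rw [mul_comm (‖c‖), mul_assoc, div_mul_comm, div_self (norm_ne_zero_iff.mpr hc), one_mul]

lemma integral_fourier_zero {n : ℤ} (hn : n ≠ 0) :
    ∫ z : AddCircle (1:ℝ), fourier n z ∂(haarAddCircle) = 0 := by
  have h0 : ∫ z : AddCircle (1:ℝ), fourier n z ∂(haarAddCircle) = fourierCoeff (fun z : AddCircle (1:ℝ) => (fourier n z : ℂ)) 0 := by
    rw [fourierCoeff]
    congr 1
    funext t
    simp
  rw [h0, fourierCoeff_eq_intervalIntegral _ 0 0]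
  have hrw : ∀ x : ℝ, (fourier (-0) (x : AddCircle (1:ℝ)) : ℂ) • (fourier n (x : AddCircle (1:ℝ)) : ℂ)
      = Complex.exp ((2 * π * Complex.I * n) * x) := by
    intro x
    rw [neg_zero, fourier_zero, one_smul, fourier_coe_apply]
    congr 1
    push_cast
    field_simp
  rw [intervalIntegral.integral_congr (fun x _ => hrw x)]
  have hc : (2 * (π:ℂ) * Complex.I * n) ≠ 0 := by
    apply mul_ne_zero (mul_ne_zero (mul_ne_zero two_ne_zero _) Complex.I_ne_zero)
    · exact_mod_cast Int.cast_ne_zero.mpr hn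
    · exact_mod_cast Complex.ofReal_ne_zero.mpr Real.pi_ne_zero
  rw [integral_exp_mul_complex hc]
  simp only [Complex.ofReal_add, Complex.ofReal_zero, Complex.ofReal_one, zero_add, mul_one,
    mul_zero, Complex.exp_zero]
  rw [show (2 * (π:ℂ) * Complex.I * n) = n * (2 * π * Complex.I) by ring,
    Complex.exp_int_mul_two_pi_mul_I, sub_self, zero_div, smul_zero]

lemma fourier_mul_apply {n : ℤ} (x y : AddCircle (1:ℝ)) :
    (fourier n (x + y) : ℂ) = fourier n x * fourier n y := by
  rw [fourier_apply, fourier_apply, fourier_apply, smul_add, AddCircle.toCircle_add,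
    Circle.coe_mul]


lemma good_fourier (a : ℝ) (ha : Irrational a) (n : ℤ) : good a (fourier n) := by
  rcases eq_or_ne n 0 with rfl | hn
  · intro ε hε
    refine ⟨0, fun N _ θ => ?_⟩
    have h1 : ∀ x : AddCircle (1:ℝ), (fourier 0 x : ℂ) = 1 := fun x => fourier_zero
    simp only [h1]
    rw [MeasureTheory.integral_const]
    simp
    exact mul_nonneg (Nat.cast_nonneg N) hε.le
  · intro ε hε
    set z : ℂ := (fourier n (ac a) : ℂ) with hz
    have hznorm : ‖z‖ = 1 := by
      rw [hz, fourier_apply]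
      exact Circle.norm_coe _
    have hz1 : z ≠ 1 := by
      intro h
      rw [hz, fourier_apply] at h
      have h2 : AddCircle.toCircle (n • ac a) = 1 := Circle.coe_eq_one.mp h
      have h3 : n • ac a = 0 := by
        apply AddCircle.injective_toCircle one_ne_zero
        rw [h2, AddCircle.toCircle_zero]
      have h4 : ((n * a : ℝ) : AddCircle (1:ℝ)) = 0 := by
        rw [← h3, ac]
        push_cast
        rw [← AddCircle.coe_zsmul]
        congr 1
        simp [zsmul_eq_mul]
      rcases (AddCircle.coe_eq_zero_iff _).mp h4 with ⟨m, hm⟩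
      apply ha
      refine ⟨(m : ℚ) / (n : ℚ), ?_⟩
      have hna : (n : ℝ) ≠ 0 := Int.cast_ne_zero.mpr hn
      push_cast
      rw [div_eq_iff hna]
      rw [zsmul_eq_mul, mul_one] at hm
      linarith
    have hpow : ∀ (θ : AddCircle (1:ℝ)) (l : ℕ), (fourier n (θ + l • ac a) : ℂ) = fourier n θ * z ^ l := by
      intro θ l
      induction l with
      | zero => simp
      | succ l ih =>
          have : θ + (l+1) • ac a = (θ + l • ac a) + ac a := by
            rw [add_assoc, ← succ_nsmul]
          rw [this, fourier_mul_apply, ih, pow_succ, hz]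
          ring
    refine ⟨⌈(2 / ‖z - 1‖) / ε⌉₊, fun N hN θ => ?_⟩
    have hsum : (∑ l ∈ Finset.range N, (fourier n (θ + l • ac a) : ℂ)) =
        fourier n θ * ((z ^ N - 1) / (z - 1)) := by
      rw [← geom_sum_eq hz1]
      rw [Finset.mul_sum]
      exact Finset.sum_congr rfl fun l _ => hpow θ l
    rw [integral_fourier_zero hn, mul_zero, sub_zero, hsum, norm_mul]
    have hfn : ‖(fourier n θ : ℂ)‖ = 1 := by rw [fourier_apply]; exact Circle.norm_coe _
    rw [hfn, one_mul, norm_div]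
    have hzm1 : ‖z - 1‖ ≠ 0 := by
      rw [norm_ne_zero_iff]
      exact sub_ne_zero.mpr hz1
    have hzm1' : 0 < ‖z - 1‖ := lt_of_le_of_ne (norm_nonneg _) (Ne.symm hzm1)
    have hnum : ‖z ^ N - 1‖ ≤ 2 := by
      calc ‖z ^ N - 1‖ ≤ ‖z ^ N‖ + ‖(1:ℂ)‖ := norm_sub_le _ _
      _ = 1 + 1 := by rw [norm_pow, hznorm, one_pow, norm_one]
      _ = 2 := by norm_num
    calc ‖z ^ N - 1‖ / ‖z - 1‖ ≤ 2 / ‖z - 1‖ := by gcongr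
    _ ≤ N * ε := by
          have h1 : (2 / ‖z - 1‖) / ε ≤ (⌈(2 / ‖z - 1‖) / ε⌉₊ : ℝ) := Nat.le_ceil _
          have h2 : ((⌈(2 / ‖z - 1‖) / ε⌉₊ : ℕ) : ℝ) ≤ (N : ℝ) := Nat.cast_le.mpr hN
          rw [div_le_iff₀ hε] at h1
          calc 2 / ‖z - 1‖ ≤ (⌈(2 / ‖z - 1‖) / ε⌉₊ : ℝ) * ε := h1
          _ ≤ N * ε := mul_le_mul_of_nonneg_right (h2.trans' (by norm_num)) hε.le

lemma good_span (a : ℝ) (ha : Irrational a) {P : C(AddCircle (1:ℝ), ℂ)}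
    (hP : P ∈ Submodule.span ℂ (Set.range (@fourier 1))) : good a P := by
  induction hP using Submodule.span_induction with
  | mem x h => obtain ⟨n, rfl⟩ := h; exact good_fourier a ha n
  | zero => exact good_zero a
  | add x y hx hy hgx hgy => exact good_add a hgx hgy
  | smul c x hx hgx => exact good_smul a c hgx

lemma good_all (a : ℝ) (ha : Irrational a) (G : C(AddCircle (1:ℝ), ℂ)) : good a G := by
  intro ε hε
  have hG : G ∈ (Submodule.span ℂ (Set.range (@fourier 1))).topologicalClosure := by
    rw [span_fourier_closure_eq_top]; trivial
  have hG' : G ∈ closure ((Submodule.span ℂ (Set.range (@fourier 1)) :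
      Submodule ℂ C(AddCircle (1:ℝ), ℂ)) : Set C(AddCircle (1:ℝ), ℂ)) := by
    rw [← Submodule.topologicalClosure_coe]
    exact hG
  obtain ⟨P, hPmem, hPdist⟩ := Metric.mem_closure_iff.mp hG' (ε/3) (by linarith)
  obtain ⟨N₀, hN₀⟩ := good_span a ha hPmem (ε/3) (by linarith)
  refine ⟨N₀, fun N hN θ => ?_⟩
  have key := hN₀ N hN θ
  have hpt : ∀ x : AddCircle (1:ℝ), ‖G x - P x‖ ≤ ε/3 := by
    intro x
    rw [← dist_eq_norm]
    exact le_of_lt (lt_of_le_of_lt (ContinuousMap.dist_apply_le_dist x) hPdist)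
  set SG := ∑ l ∈ Finset.range N, G (θ + l • ac a)
  set SP := ∑ l ∈ Finset.range N, P (θ + l • ac a)
  set IG := ∫ z, G z ∂(haarAddCircle)
  set IP := ∫ z, P z ∂(haarAddCircle)
  have h1 : ‖SG - SP‖ ≤ N * (ε/3) := by
    rw [← Finset.sum_sub_distrib]
    calc ‖∑ l ∈ Finset.range N, (G (θ + l • ac a) - P (θ + l • ac a))‖
        ≤ ∑ l ∈ Finset.range N, ‖G (θ + l • ac a) - P (θ + l • ac a)‖ := norm_sum_le _ _
    _ ≤ ∑ l ∈ Finset.range N, (ε/3) := Finset.sum_le_sum fun l _ => hpt _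
    _ = N * (ε/3) := by rw [Finset.sum_const, Finset.card_range, nsmul_eq_mul]
  have h2 : ‖IG - IP‖ ≤ ε/3 := by
    rw [← integral_sub (integrable_cm G) (integrable_cm P)]
    have := norm_integral_le_of_norm_le_const (μ := (haarAddCircle : Measure (AddCircle (1:ℝ))))
      (C := ε/3) (f := fun z => G z - P z) (Filter.Eventually.of_forall fun x => hpt x)
    simpa using this
  have hfinal : SG - (N:ℂ) * IG = (SG - SP) + (SP - (N:ℂ) * IP) + ((N:ℂ) * IP - (N:ℂ) * IG) := by
    ring
  rw [hfinal]
  calc ‖(SG - SP) + (SP - (N:ℂ) * IP) + ((N:ℂ) * IP - (N:ℂ) * IG)‖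
      ≤ ‖(SG - SP) + (SP - (N:ℂ) * IP)‖ + ‖(N:ℂ) * IP - (N:ℂ) * IG‖ := norm_add_le _ _
  _ ≤ (‖SG - SP‖ + ‖SP - (N:ℂ) * IP‖) + ‖(N:ℂ) * IP - (N:ℂ) * IG‖ :=
      add_le_add_left (norm_add_le _ _) _
  _ ≤ (N * (ε/3) + N * (ε/3)) + N * (ε/3) := by
      apply add_le_add (add_le_add h1 key)
      have : (N:ℂ) * IP - (N:ℂ) * IG = (N:ℂ) * (IP - IG) := by ring
      rw [this, norm_mul]
      have hcn : ‖(N:ℂ)‖ = (N:ℝ) := by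
        simp [Complex.norm_natCast]
      rw [hcn]
      apply mul_le_mul_of_nonneg_left _ (Nat.cast_nonneg N)
      rw [norm_sub_rev] at h2
      exact h2
  _ = N * ε := by ring

lemma weyl_real (a : ℝ) (ha : Irrational a) (F : ℝ → ℝ) (hF : Continuous F)
    (hper : Function.Periodic F 1) (ε : ℝ) (hε : 0 < ε) :
    ∃ N₀ : ℕ, ∀ N : ℕ, N₀ ≤ N → ∀ θ : ℝ,
      ∑ l ∈ Finset.range N, F (θ + l * a) ≤ N * ((∫ x in Set.Ioc (0:ℝ) 1, F x) + ε) := by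
  -- lift F to the circle
  have hcont : Continuous (hper.lift) := by
    unfold Function.Periodic.lift
    exact hF.quotient_liftOn' _
  set G : C(AddCircle (1:ℝ), ℝ) := ⟨hper.lift, hcont⟩ with hG
  have hGcoe : ∀ x : ℝ, G ((x : ℝ) : AddCircle (1:ℝ)) = F x := fun x => hper.lift_coe x
  set GC : C(AddCircle (1:ℝ), ℂ) := ⟨fun z => (G z : ℂ), Complex.continuous_ofReal.comp G.continuous⟩ with hGC
  obtain ⟨N₀, hN₀⟩ := good_all a ha GC ε hε
  refine ⟨N₀, fun N hN θ => ?_⟩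
  have key := hN₀ N hN ((θ : ℝ) : AddCircle (1:ℝ))
  -- identify integrals
  have hIG : ∫ z, G z ∂(haarAddCircle) = ∫ x in Set.Ioc (0:ℝ) 1, F x := by
    have h1 : ∫ z, G z ∂(haarAddCircle) = ∫ z, G z ∂(volume : Measure (AddCircle (1:ℝ))) := by
      rw [AddCircle.volume_eq_smul_haarAddCircle]
      simp
    rw [h1, ← AddCircle.integral_preimage (1:ℝ) 0 (G : AddCircle (1:ℝ) → ℝ)]
    rw [zero_add]
    exact setIntegral_congr_fun measurableSet_Ioc fun x _ => hGcoe x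
  have hIGC : ∫ z, GC z ∂(haarAddCircle) = ((∫ x in Set.Ioc (0:ℝ) 1, F x : ℝ) : ℂ) := by
    have : ∫ z, GC z ∂(haarAddCircle) = ((∫ z, G z ∂(haarAddCircle) : ℝ) : ℂ) := by
      rw [hGC]
      exact integral_ofReal
    rw [this, hIG]
  -- identify sums
  have hpt : ∀ l : ℕ, GC (((θ : ℝ) : AddCircle (1:ℝ)) + l • ac a) = ((F (θ + l * a) : ℝ) : ℂ) := by
    intro l
    have hcast : ((θ : ℝ) : AddCircle (1:ℝ)) + l • ac a = ((θ + l * a : ℝ) : AddCircle (1:ℝ)) := by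
      rw [ac, ← AddCircle.coe_nsmul]
      push_cast
      rw [nsmul_eq_mul, ← AddCircle.coe_add]
    rw [hcast]
    show ((G _ : ℝ) : ℂ) = _
    rw [hGcoe]
  have hsum : (∑ l ∈ Finset.range N, GC (((θ : ℝ) : AddCircle (1:ℝ)) + l • ac a)) =
      ((∑ l ∈ Finset.range N, F (θ + l * a) : ℝ) : ℂ) := by
    rw [Finset.sum_congr rfl fun l _ => hpt l]
    push_cast
    rfl
  rw [hsum, hIGC] at key
  have hre : (∑ l ∈ Finset.range N, F (θ + l * a)) - N * (∫ x in Set.Ioc (0:ℝ) 1, F x) ≤ N * ε := by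
    have h1 : ((∑ l ∈ Finset.range N, F (θ + l * a) : ℝ) : ℂ) - (N:ℂ) * ((∫ x in Set.Ioc (0:ℝ) 1, F x : ℝ) : ℂ)
        = (((∑ l ∈ Finset.range N, F (θ + l * a)) - N * (∫ x in Set.Ioc (0:ℝ) 1, F x) : ℝ) : ℂ) := by
      push_cast
      ring
    rw [h1] at key
    rw [Complex.norm_real] at key
    exact (le_abs_self _).trans key
  linarith

lemma int_Icc_prod (f : ℤ → ℝ) (c d : ℤ) :
    ∏ l ∈ Finset.Icc c d, f l = ∏ i ∈ Finset.range ((d+1-c).toNat), f (c + i) := by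
  have hemb : Function.Injective (fun i : ℕ => c + (i:ℤ)) := by
    intro i j h
    simp only at h
    omega
  have h : Finset.Icc c d = (Finset.range ((d+1-c).toNat)).map ⟨fun i : ℕ => c + (i:ℤ), hemb⟩ := by
    ext l
    simp only [Finset.mem_Icc, Finset.mem_map, Finset.mem_range, Function.Embedding.coeFn_mk]
    constructor
    · intro hl; exact ⟨(l - c).toNat, by omega, by omega⟩
    · rintro ⟨i, hi, rfl⟩; omega
  rw [h, Finset.prod_map]
  rfl

lemma sum_log_bound (a : ℝ) (ha : Irrational a) (ε : ℝ) (hε : 0 < ε) :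
    ∃ N₀ : ℕ, 0 < N₀ ∧ ∀ θ : ℝ, ∀ N : ℕ,
    (∀ l ∈ Finset.range N, Real.cos (π * (θ + l * a)) ≠ 0) →
    ∑ l ∈ Finset.range N, Real.log |2 * Real.cos (π * (θ + l * a))| ≤ N * ε + N₀ * Real.log 2 := by
  obtain ⟨δ, hδ0, hδ1, hδint⟩ := trunc_small (ε/2) (half_pos hε)
  set Fδ : ℝ → ℝ := fun x => Real.log (max |2 * Real.cos (π * x)| δ) with hFδ
  have hFcont : Continuous Fδ := by
    apply Continuous.log
    · exact ((continuous_const.mul (Real.continuous_cos.comp (continuous_const.mul continuous_id))).abs).max continuous_const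
    · intro x
      exact ne_of_gt (lt_of_lt_of_le hδ0 (le_max_right _ _))
  have hFper : Function.Periodic Fδ 1 := by
    intro x
    have : π * (x + 1) = π * x + π := by ring
    simp only [hFδ, this, Real.cos_add_pi]
    congr 2
    rw [mul_neg, abs_neg]
  obtain ⟨N₁, hN₁⟩ := weyl_real a ha Fδ hFcont hFper (ε/2) (half_pos hε)
  refine ⟨max N₁ 1, lt_of_lt_of_le one_pos (le_max_right _ _), fun θ N hcos => ?_⟩
  have hlog2 : (0:ℝ) ≤ Real.log 2 := Real.log_nonneg (by norm_num)
  have hterm : ∀ l ∈ Finset.range N, Real.log |2 * Real.cos (π * (θ + l * a))| ≤ Fδ (θ + l * a) := by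
    intro l hl
    apply Real.log_le_log _ (le_max_left _ _)
    rw [abs_pos]
    exact mul_ne_zero two_ne_zero (hcos l hl)
  rcases le_or_gt (max N₁ 1) N with hbig | hsmall
  · have h1 : ∑ l ∈ Finset.range N, Real.log |2 * Real.cos (π * (θ + l * a))| ≤
        ∑ l ∈ Finset.range N, Fδ (θ + l * a) := Finset.sum_le_sum hterm
    have h2 := hN₁ N (le_trans (le_max_left _ _) hbig) θ
    have h3 : (N:ℝ) * ((∫ x in Set.Ioc (0:ℝ) 1, Fδ x) + ε/2) ≤ N * ε := by
      apply mul_le_mul_of_nonneg_left _ (Nat.cast_nonneg N)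
      linarith [hδint]
    have h4 : (0:ℝ) ≤ (max N₁ 1 : ℕ) * Real.log 2 := by positivity
    linarith
  · have h1 : ∑ l ∈ Finset.range N, Real.log |2 * Real.cos (π * (θ + l * a))| ≤
        ∑ l ∈ Finset.range N, Real.log 2 := by
      apply Finset.sum_le_sum
      intro l hl
      apply Real.log_le_log (abs_pos.mpr (mul_ne_zero two_ne_zero (hcos l hl)))
      rw [abs_mul, abs_two]
      nlinarith [abs_cos_le_one (π * (θ + l * a)), abs_nonneg (Real.cos (π * (θ + l * a)))]
    rw [Finset.sum_const, Finset.card_range, nsmul_eq_mul] at h1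
    have h2 : (N:ℝ) * Real.log 2 ≤ (max N₁ 1 : ℕ) * Real.log 2 := by
      apply mul_le_mul_of_nonneg_right _ hlog2
      exact_mod_cast hsmall.le
    have h3 : (0:ℝ) ≤ N * ε := by positivity
    linarith

lemma prod_bound (a : ℝ) (ha : Irrational a) (ε : ℝ) (hε : 0 < ε) :
    ∃ N₀ : ℕ, 0 < N₀ ∧ ∀ θ : ℝ, ∀ c d : ℤ,
    (∀ l ∈ Finset.Icc c d, Real.cos (π * (θ + l * a)) ≠ 0) →
    ∏ l ∈ Finset.Icc c d, |Real.cos (π * (θ + l * a))| ≤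
      Real.exp ((((d + 1 - c).toNat : ℝ)) * (-Real.log 2 + ε) + N₀ * Real.log 2) := by
  obtain ⟨N₀, hN₀, hsum⟩ := sum_log_bound a ha ε hε
  refine ⟨N₀, hN₀, fun θ c d hcos => ?_⟩
  have hlog2 : (0:ℝ) ≤ Real.log 2 := Real.log_nonneg (by norm_num)
  set n : ℕ := (d + 1 - c).toNat with hn
  set θ' : ℝ := θ + c * a with hθ'
  have harg : ∀ i : ℕ, θ + ((c + (i:ℤ)) : ℤ) * a = θ' + i * a := by
    intro i; rw [hθ']; push_cast; ring
  rw [int_Icc_prod (fun l => |Real.cos (π * (θ + l * a))|) c d]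
  have hprod : ∏ i ∈ Finset.range n, |Real.cos (π * (θ + ((c + (i:ℤ)) : ℤ) * a))| =
      ∏ i ∈ Finset.range n, |Real.cos (π * (θ' + i * a))| := by
    apply Finset.prod_congr rfl
    intro i _
    rw [harg i]
  rw [hprod]
  have hcos' : ∀ i ∈ Finset.range n, Real.cos (π * (θ' + i * a)) ≠ 0 := by
    intro i hi
    rw [← harg i]
    apply hcos
    rw [Finset.mem_Icc]
    rw [Finset.mem_range] at hi
    omega
  have hkey := hsum θ' n hcos'
  have hfac : ∀ i ∈ Finset.range n, |Real.cos (π * (θ' + i * a))| =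
      Real.exp (Real.log |2 * Real.cos (π * (θ' + i * a))|) / 2 := by
    intro i hi
    rw [Real.exp_log (abs_pos.mpr (mul_ne_zero two_ne_zero (hcos' i hi)))]
    rw [abs_mul, abs_two]
    ring
  rw [Finset.prod_congr rfl hfac, Finset.prod_div_distrib, Finset.prod_const, Finset.card_range,
    ← Real.exp_sum]
  rw [div_le_iff₀ (by positivity)]
  have h2n : (2:ℝ)^n = Real.exp (n * Real.log 2) := by
    rw [Real.exp_nat_mul, Real.exp_log two_pos]
  rw [h2n, ← Real.exp_add, Real.exp_le_exp]
  have : ((n:ℝ)) * (-Real.log 2 + ε) + N₀ * Real.log 2 + n * Real.log 2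
      = n * ε + N₀ * Real.log 2 := by ring
  rw [this]
  exact hkey


/-- for every `ε > 0` there is `C(ε) > 0` (depending only on `ε` and `α`)
bounding products of `|cos|` along finite orbit segments by the minimal term:
`∏_{ℓ=ℓ₁}^{ℓ₂} |cos π(θ+ℓα)| ≤ C(ε) e^{(ℓ₂-ℓ₁)(-log 2 + ε)} min_j |cos π(θ+jα)|`. -/
theorem stmt4 (a : ℝ) (ha : Irrational a) (ha0 : 0 < a) (ha1 : a < 1) :
    ∀ ε : ℝ, 0 < ε → ∃ C : ℝ, 0 < C ∧
      ∀ θ : ℝ, ∀ l1 l2 : ℤ, l1 ≤ l2 →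
        ∀ j ∈ Finset.Icc l1 l2,
          (∏ l ∈ Finset.Icc l1 l2, |Real.cos (Real.pi * (θ + l * a))|) ≤
            C * Real.exp (((l2 : ℝ) - l1) * (-Real.log 2 + ε)) *
              |Real.cos (Real.pi * (θ + j * a))| := by
  intro ε hε
  obtain ⟨N₀, hN₀, hpb⟩ := prod_bound a ha ε hε
  refine ⟨Real.exp (2 * N₀ * Real.log 2), Real.exp_pos _, fun θ l1 l2 hl j hj => ?_⟩
  by_cases hzero : ∃ l ∈ Finset.Icc l1 l2, Real.cos (π * (θ + l * a)) = 0
  · obtain ⟨l0, hl0mem, hl0⟩ := hzero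
    have hP : ∏ l ∈ Finset.Icc l1 l2, |Real.cos (π * (θ + l * a))| = 0 :=
      Finset.prod_eq_zero hl0mem (by rw [hl0, abs_zero])
    rw [hP]
    positivity
  · push_neg at hzero
    have hj' := Finset.mem_Icc.mp hj
    -- split off the j-th factor
    rw [← Finset.mul_prod_erase _ _ hj]
    -- the erased set is a union of two intervals
    have hsplit : (Finset.Icc l1 l2).erase j = Finset.Icc l1 (j-1) ∪ Finset.Icc (j+1) l2 := by
      ext l
      simp only [Finset.mem_erase, Finset.mem_Icc, Finset.mem_union]
      omega
    have hdisj : Disjoint (Finset.Icc l1 (j-1)) (Finset.Icc (j+1) l2) := by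
      rw [Finset.disjoint_left]
      intro l h1 h2
      rw [Finset.mem_Icc] at h1 h2
      omega
    rw [hsplit, Finset.prod_union hdisj]
    have hc1 : ∀ l ∈ Finset.Icc l1 (j-1), Real.cos (π * (θ + l * a)) ≠ 0 := by
      intro l hlmem
      apply hzero
      rw [Finset.mem_Icc] at hlmem ⊢
      omega
    have hc2 : ∀ l ∈ Finset.Icc (j+1) l2, Real.cos (π * (θ + l * a)) ≠ 0 := by
      intro l hlmem
      apply hzero
      rw [Finset.mem_Icc] at hlmem ⊢
      omega
    have hb1 := hpb θ l1 (j-1) hc1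
    have hb2 := hpb θ (j+1) l2 hc2
    have hprodnn1 : (0:ℝ) ≤ ∏ l ∈ Finset.Icc l1 (j-1), |Real.cos (π * (θ + l * a))| :=
      Finset.prod_nonneg fun l _ => abs_nonneg _
    have hprodnn2 : (0:ℝ) ≤ ∏ l ∈ Finset.Icc (j+1) l2, |Real.cos (π * (θ + l * a))| :=
      Finset.prod_nonneg fun l _ => abs_nonneg _
    have hmul : (∏ l ∈ Finset.Icc l1 (j-1), |Real.cos (π * (θ + l * a))|) *
        (∏ l ∈ Finset.Icc (j+1) l2, |Real.cos (π * (θ + l * a))|) ≤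
        Real.exp ((((j-1) + 1 - l1).toNat : ℝ) * (-Real.log 2 + ε) + N₀ * Real.log 2) *
        Real.exp (((l2 + 1 - (j+1)).toNat : ℝ) * (-Real.log 2 + ε) + N₀ * Real.log 2) :=
      mul_le_mul hb1 hb2 hprodnn2 (Real.exp_pos _).le
    have hcount : ((((j-1) + 1 - l1).toNat : ℝ)) + (((l2 + 1 - (j+1)).toNat : ℝ)) = (l2:ℝ) - l1 := by
      have h1 : (((j-1) + 1 - l1).toNat : ℤ) = j - l1 := by omega
      have h2 : ((l2 + 1 - (j+1)).toNat : ℤ) = l2 - j := by omega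
      have h1' : ((((j-1) + 1 - l1).toNat : ℤ) : ℝ) = (j:ℝ) - (l1:ℝ) := by exact_mod_cast congrArg (fun z : ℤ => (z:ℝ)) h1
      have h2' : (((l2 + 1 - (j+1)).toNat : ℤ) : ℝ) = (l2:ℝ) - (j:ℝ) := by exact_mod_cast congrArg (fun z : ℤ => (z:ℝ)) h2
      push_cast at h1' h2' ⊢
      rw [h1', h2']
      ring
    have hexp : Real.exp ((((j-1) + 1 - l1).toNat : ℝ) * (-Real.log 2 + ε) + N₀ * Real.log 2) *
        Real.exp (((l2 + 1 - (j+1)).toNat : ℝ) * (-Real.log 2 + ε) + N₀ * Real.log 2) =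
        Real.exp (2 * N₀ * Real.log 2) * Real.exp (((l2:ℝ) - l1) * (-Real.log 2 + ε)) := by
      rw [← Real.exp_add, ← Real.exp_add]
      congr 1
      rw [← hcount]
      ring
    rw [mul_comm (|Real.cos (π * (θ + j * a))|)]
    apply mul_le_mul _ le_rfl (abs_nonneg _) (by positivity)
    calc (∏ l ∈ Finset.Icc l1 (j-1), |Real.cos (π * (θ + l * a))|) *
        (∏ l ∈ Finset.Icc (j+1) l2, |Real.cos (π * (θ + l * a))|) ≤ _ := hmul
    _ = _ := hexp
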